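/- Suppose (A0), (B1), (B2) hold: the chain is irreducible and transient on E, (E,⋆) is a semigroup with identity e contained in a group, and p(x⋆u, y⋆u) ≥ p(x,y) for all x,y,u ∈ E. Then the matrix P_H with entries p_H(x,y) = Σ_{z∈E} G(e,z) a_x(z,y) is substochastic: p_H(x,y) ≥ 0 for all x,y and Σ_{y∈E} p_H(x,y) ≤ 1 for all x ∈ E. -/

import Mathlib

open scoped ENNReal Classical BigOperators
open Filter

noncomputable section

namespace RW

variable {G : Type*}

/-- One-step transition operator `Pφ(x) = Σ_y p(x,y) φ(y)`. -/
def kapp (p : G → G → ℝ≥0∞) (φ : G → ℝ≥0∞) (x : G) : ℝ≥0∞ := ∑' y, p x y * φ y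

/-- n-step transition kernel. -/
def kiter (p : G → G → ℝ≥0∞) : ℕ → G → G → ℝ≥0∞
  | 0 => fun x y => if x = y then 1 else 0
  | n + 1 => fun x y => ∑' z, p x z * kiter p n z y

/-- Green function `G(x,y) = Σ_t ℙ_x(X(t)=y)`. -/
def green (p : G → G → ℝ≥0∞) (x y : G) : ℝ≥0∞ := ∑' n, kiter p n x y

/-- Green operator `Gφ(x) = Σ_y G(x,y) φ(y)`. -/
def greenApp (p : G → G → ℝ≥0∞) (φ : G → ℝ≥0∞) (x : G) : ℝ≥0∞ := ∑' y, green p x y * φ y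

/-- Probability of first hitting `y` at time `n ≥ 1`. -/
def fhit (p : G → G → ℝ≥0∞) : ℕ → G → G → ℝ≥0∞
  | 0 => fun _ _ => 0
  | 1 => p
  | n + 2 => fun x y => ∑' z, if z = y then 0 else p x z * fhit p (n + 1) z y

/-- Hitting probability `Q(x,y) = ℙ_x(∃ t ≥ 1, X(t) = y)`. -/
def hitProb (p : G → G → ℝ≥0∞) (x y : G) : ℝ≥0∞ := ∑' n, fhit p n x y

/-- Survival probability `ℙ_x(τ_ϑ > n)`. -/
def surv (p : G → G → ℝ≥0∞) (n : ℕ) (x : G) : ℝ≥0∞ := ∑' y, kiter p n x y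

/-- Expected lifetime `𝔼_x(τ_ϑ) = Σ_n ℙ_x(τ_ϑ > n)`. -/
def gexp (p : G → G → ℝ≥0∞) (x : G) : ℝ≥0∞ := ∑' n, surv p n x

variable [Group G]

/-- Matrix coefficients `a_u(x,y)` of the operator `A_u = T_u P - P T_u`. -/
def acoef (p : G → G → ℝ≥0∞) (E : Set G) (u x y : G) : ℝ≥0∞ :=
  if y * u⁻¹ ∈ E then p (x * u) y - p x (y * u⁻¹) else p (x * u) y

/-- The operator `A_u φ(x) = Σ_y a_u(x,y) φ(y)`. -/
def Aop (p : G → G → ℝ≥0∞) (E : Set G) (u : G) (φ : G → ℝ≥0∞) (x : G) : ℝ≥0∞ :=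
  ∑' y, acoef p E u x y * φ y

/-- Ladder height transition kernel `p_H(x,y) = G A_x 𝟙_{y}(e)`. -/
def ladder (p : G → G → ℝ≥0∞) (E : Set G) (x y : G) : ℝ≥0∞ :=
  ∑' z, green p 1 z * acoef p E x z y

/-- The renewal function `V(x) = 𝔼_x(𝒯_ϑ)` of the ladder height process. -/
def V (p : G → G → ℝ≥0∞) (E : Set G) (x : G) : ℝ≥0∞ :=
  ∑' n, surv (ladder p E) n x

end RW

end

open RW

section Helpers

open scoped ENNReal

/-- General-index tsum subtraction in `ℝ≥0∞`. -/
lemma my_tsum_sub {ι : Type*} {f g : ι → ℝ≥0∞} (hfin : ∑' i, g i ≠ ⊤)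
    (hle : ∀ i, g i ≤ f i) : ∑' i, (f i - g i) = ∑' i, f i - ∑' i, g i := by
  refine ENNReal.eq_sub_of_add_eq hfin ?_
  rw [← ENNReal.tsum_add]
  exact tsum_congr fun i => tsub_add_cancel_of_le (hle i)

variable {G : Type*} [Group G] [Countable G]
variable (p : G → G → ℝ≥0∞) (E : Set G)

/-- right composition for kiter -/
lemma kiter_succ_right (n : ℕ) (x y : G) :
    kiter p (n + 1) x y = ∑' z, kiter p n x z * p z y := by
  induction n generalizing x y with
  | zero =>
    show (∑' z, p x z * kiter p 0 z y) = _
    simp only [kiter]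
    rw [tsum_eq_single y (by intro z hz; simp [hz]), tsum_eq_single x (by intro z hz; simp [Ne.symm hz])]
    simp
  | succ n ih =>
    show (∑' z, p x z * kiter p (n+1) z y) = ∑' z, kiter p (n+1) x z * p z y
    calc (∑' z, p x z * kiter p (n+1) z y)
        = ∑' z, p x z * ∑' w, kiter p n z w * p w y := by
          exact tsum_congr fun z => by rw [ih]
      _ = ∑' z, ∑' w, p x z * (kiter p n z w * p w y) := by
          exact tsum_congr fun z => ENNReal.tsum_mul_left.symm
      _ = ∑' w, (∑' z, p x z * kiter p n z w) * p w y := by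
          rw [ENNReal.tsum_comm]
          refine tsum_congr fun w => ?_
          rw [← ENNReal.tsum_mul_right]
          exact tsum_congr fun a => (mul_assoc _ _ _).symm
      _ = ∑' w, kiter p (n+1) x w * p w y := rfl

variable (hsupp : ∀ x y, p x y ≠ 0 → x ∈ E ∧ y ∈ E)
variable (hsub : ∀ x, (∑' y, p x y) ≤ 1)

include hsupp in
lemma kiter_mem (n : ℕ) (x : G) (hx : x ∈ E) (z : G) (h : kiter p n x z ≠ 0) : z ∈ E := by
  induction n generalizing x with
  | zero =>
    simp only [kiter] at h
    by_cases hxz : x = z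
    · exact hxz ▸ hx
    · simp [hxz] at h
  | succ n ih =>
    simp only [kiter, Ne, ENNReal.tsum_eq_zero] at h
    push_neg at h
    obtain ⟨w, hw⟩ := h
    exact ih w ((hsupp x w fun h0 => hw (by simp [h0])).2) fun h0 => hw (by simp [h0])

include hsub in
lemma surv_le_one (n : ℕ) (x : G) : surv p n x ≤ 1 := by
  induction n generalizing x with
  | zero =>
    unfold surv
    rw [tsum_eq_single x (by intro z hz; simp [kiter, Ne.symm hz])]
    simp [kiter]
  | succ n ih =>
    unfold surv
    calc (∑' y, kiter p (n+1) x y) = ∑' y, ∑' z, p x z * kiter p n z y := rfl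
      _ = ∑' z, p x z * surv p n z := by
          rw [ENNReal.tsum_comm]; exact tsum_congr fun z => ENNReal.tsum_mul_left
      _ ≤ ∑' z, p x z * 1 := ENNReal.tsum_le_tsum fun z => mul_le_mul_right (ih z) _
      _ ≤ 1 := by simpa using hsub x

include hsupp in
lemma rowsum_mono {z x : G} (hz : z ∈ E) (hx : x ∈ E)
    (hmono : ∀ a ∈ E, ∀ b ∈ E, ∀ u ∈ E, p a b ≤ p (a * u) (b * u)) :
    (∑' w, p z w) ≤ ∑' y, p (z * x) y := by
  calc (∑' w, p z w) ≤ ∑' w, p (z * x) (w * x) := by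
        refine ENNReal.tsum_le_tsum fun w => ?_
        by_cases hw : p z w = 0
        · simp [hw]
        · exact hmono z hz w (hsupp z w hw).2 x hx
    _ = ∑' y, p (z * x) y := (Equiv.mulRight x).tsum_eq _

include hsupp hsub in
lemma acoef_rowsum {z x : G} (hz : z ∈ E) (hx : x ∈ E)
    (hmono : ∀ a ∈ E, ∀ b ∈ E, ∀ u ∈ E, p a b ≤ p (a * u) (b * u)) :
    (∑' y, acoef p E x z y) = (∑' y, p (z * x) y) - ∑' w, p z w := by
  have key : ∀ y : G, acoef p E x z y
      = p (z * x) y - (if y * x⁻¹ ∈ E then p z (y * x⁻¹) else 0) := by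
    intro y
    unfold acoef
    by_cases h : y * x⁻¹ ∈ E <;> simp [h]
  have hle : ∀ y : G, (if y * x⁻¹ ∈ E then p z (y * x⁻¹) else 0) ≤ p (z * x) y := by
    intro y
    by_cases h : y * x⁻¹ ∈ E
    · simpa [h] using (by
        have := hmono z hz (y * x⁻¹) h x hx
        simpa using this)
    · simp [h]
  have hq : (∑' y, (if y * x⁻¹ ∈ E then p z (y * x⁻¹) else 0)) = ∑' w, p z w := by
    rw [← (Equiv.mulRight x).tsum_eq]
    refine tsum_congr fun w => ?_
    simp only [Equiv.coe_mulRight, mul_inv_cancel_right]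
    by_cases h : w ∈ E
    · simp [h]
    · simp only [h, if_false]
      by_contra hne
      exact h (hsupp z w (Ne.symm hne)).2
  have hfin : (∑' y, (if y * x⁻¹ ∈ E then p z (y * x⁻¹) else 0)) ≠ ⊤ := by
    rw [hq]; exact ((hsub z).trans_lt (by norm_num)).ne
  calc (∑' y, acoef p E x z y)
      = ∑' y, (p (z * x) y - (if y * x⁻¹ ∈ E then p z (y * x⁻¹) else 0)) :=
        tsum_congr key
    _ = (∑' y, p (z * x) y) - ∑' y, (if y * x⁻¹ ∈ E then p z (y * x⁻¹) else 0) :=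
        my_tsum_sub hfin hle
    _ = (∑' y, p (z * x) y) - ∑' w, p z w := by rw [hq]

end Helpers

section Helpers2
open scoped ENNReal
variable {G : Type*} [Group G] [Countable G] (p : G → G → ℝ≥0∞)

lemma surv_succ_eq (n : ℕ) (x : G) :
    surv p (n + 1) x = ∑' z, kiter p n x z * ∑' w, p z w := by
  unfold surv
  calc (∑' y, kiter p (n+1) x y) = ∑' y, ∑' z, kiter p n x z * p z y :=
        tsum_congr fun y => kiter_succ_right p n x y
    _ = ∑' z, ∑' y, kiter p n x z * p z y := ENNReal.tsum_comm
    _ = ∑' z, kiter p n x z * ∑' w, p z w := tsum_congr fun z => ENNReal.tsum_mul_left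

lemma surv_anti (hsub : ∀ x, (∑' y : G, p x y) ≤ 1) (n : ℕ) (x : G) :
    surv p (n + 1) x ≤ surv p n x := by
  rw [surv_succ_eq]
  calc (∑' z, kiter p n x z * ∑' w, p z w)
      ≤ ∑' z, kiter p n x z * 1 := ENNReal.tsum_le_tsum fun z => mul_le_mul_right (hsub z) _
    _ = surv p n x := by simp [surv]

end Helpers2


theorem statement7 {G : Type*} [Group G] [Countable G]
    (p : G → G → ℝ≥0∞) (E : Set G)
    (hsupp : ∀ x y, p x y ≠ 0 → x ∈ E ∧ y ∈ E)
    (hsub : ∀ x, (∑' y, p x y) ≤ 1)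
    (hirr : ∀ x ∈ E, ∀ y ∈ E, 0 < hitProb p x y)
    (htrans : ∀ x ∈ E, green p x x < ⊤)
    (hone : (1 : G) ∈ E)
    (hmul : ∀ x ∈ E, ∀ y ∈ E, x * y ∈ E)
    (hmono : ∀ x ∈ E, ∀ y ∈ E, ∀ u ∈ E, p x y ≤ p (x * u) (y * u)) :
    (∀ x y, 0 ≤ ladder p E x y) ∧
    ∀ x ∈ E, (∑' y : G, ladder p E x y) ≤ 1 := by
  refine ⟨fun x y => zero_le, fun x hx => ?_⟩
  set u : ℕ → G → ℝ≥0∞ := fun n z => kiter p n 1 z with hu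
  have hufin : ∀ n z, u n z ≠ ⊤ := fun n z =>
    (((ENNReal.le_tsum z).trans (surv_le_one p hsub n 1)).trans_lt (by norm_num)).ne
  have humem : ∀ n z, u n z ≠ 0 → z ∈ E := fun n z h => kiter_mem p E hsupp n 1 hone z h
  set s : ℕ → ℝ≥0∞ := fun n => surv p n 1 with hs
  -- step 1: rearrange the double sum
  have step1 : (∑' y : G, ladder p E x y)
      = ∑' n : ℕ, ∑' z : G, u n z * ∑' y, acoef p E x z y := by
    calc (∑' y : G, ladder p E x y)
        = ∑' z, ∑' y, green p 1 z * acoef p E x z y := ENNReal.tsum_comm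
      _ = ∑' z, green p 1 z * ∑' y, acoef p E x z y :=
          tsum_congr fun z => ENNReal.tsum_mul_left
      _ = ∑' z, ∑' n, u n z * ∑' y, acoef p E x z y := by
          refine tsum_congr fun z => ?_
          unfold green
          exact ENNReal.tsum_mul_right.symm
      _ = ∑' n, ∑' z, u n z * ∑' y, acoef p E x z y := ENNReal.tsum_comm
  -- step 2: per-n bound
  have step2 : ∀ n : ℕ, (∑' z : G, u n z * ∑' y, acoef p E x z y)
      ≤ s n - s (n + 1) := by
    intro n
    have hpt : ∀ z : G, u n z * (∑' y, acoef p E x z y)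
        = u n z * (∑' y, p (z * x) y) - u n z * (∑' w, p z w) := by
      intro z
      by_cases hz : u n z = 0
      · simp [hz]
      · rw [acoef_rowsum p E hsupp hsub (humem n z hz) hx hmono]
        exact ENNReal.mul_sub fun _ _ => hufin n z
    have hlept : ∀ z : G, u n z * (∑' w, p z w) ≤ u n z * (∑' y, p (z * x) y) := by
      intro z
      by_cases hz : u n z = 0
      · simp [hz]
      · exact mul_le_mul_right
          (rowsum_mono p E hsupp (humem n z hz) hx hmono) _
    have hB : (∑' z : G, u n z * ∑' w, p z w) = s (n + 1) := (surv_succ_eq p n 1).symm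
    have hBfin : (∑' z : G, u n z * ∑' w, p z w) ≠ ⊤ := by
      rw [hB]
      exact ((surv_le_one p hsub (n+1) 1).trans_lt (by norm_num)).ne
    have hA : (∑' z : G, u n z * ∑' y, p (z * x) y) ≤ s n := by
      calc (∑' z : G, u n z * ∑' y, p (z * x) y)
          ≤ ∑' z : G, u n z * 1 :=
            ENNReal.tsum_le_tsum fun z => mul_le_mul_right (hsub (z * x)) _
        _ = s n := by simp [hs, surv]; rfl
    calc (∑' z : G, u n z * ∑' y, acoef p E x z y)
        = ∑' z : G, (u n z * (∑' y, p (z * x) y) - u n z * (∑' w, p z w)) :=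
          tsum_congr hpt
      _ = (∑' z : G, u n z * ∑' y, p (z * x) y) - ∑' z : G, u n z * ∑' w, p z w :=
          my_tsum_sub hBfin hlept
      _ ≤ s n - s (n + 1) := by rw [hB]; exact tsub_le_tsub_right hA _
  -- step 3: telescoping
  have hanti : ∀ n : ℕ, s (n + 1) ≤ s n := fun n => surv_anti p hsub n 1
  have htel : ∀ N : ℕ, (∑ i ∈ Finset.range N, (s i - s (i + 1))) + s N = s 0 := by
    intro N
    induction N with
    | zero => simp
    | succ N ih =>
      rw [Finset.sum_range_succ, add_assoc, tsub_add_cancel_of_le (hanti N), ih]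
  have step3 : (∑' n : ℕ, (s n - s (n + 1))) ≤ 1 := by
    rw [ENNReal.tsum_eq_iSup_nat]
    refine iSup_le fun N => ?_
    calc (∑ i ∈ Finset.range N, (s i - s (i + 1)))
        ≤ (∑ i ∈ Finset.range N, (s i - s (i + 1))) + s N := le_self_add
      _ = s 0 := htel N
      _ ≤ 1 := surv_le_one p hsub 0 1
  calc (∑' y : G, ladder p E x y)
      = ∑' n : ℕ, ∑' z : G, u n z * ∑' y, acoef p E x z y := step1
    _ ≤ ∑' n : ℕ, (s n - s (n + 1)) := ENNReal.tsum_le_tsum step2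
    _ ≤ 1 := step3
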